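/- Let μ > 0, β > 0, let N ≥ 2 be an integer, set h = 1/N, Pe = βh/(2μ), τ* = (h/(2β))·(coth(Pe) − 1/Pe), and ρ = exp(βh/μ). Define u_k = (ρ^k − 1)/(ρ^N − 1) for k = 0, 1, …, N (these are the values u(kh) of the exact solution u(x) = (exp(βx/μ)−1)/(exp(β/μ)−1) at the mesh nodes). Then u_0 = 0, u_N = 1, and for every k with 1 ≤ k ≤ N−1 the SUPG difference equation holds: (μ + τ*β²)·(2u_k − u_{k+1} − u_{k−1})/h² + β·(u_{k+1} − u_{k−1})/(2h) = 0. That is, the SUPG scheme with stabilization parameter τ̃₁ = τ* is nodally exact for the 1D advection–diffusion problem with zero forcing and linear finite elements. -/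

import Mathlib

/-- The hyperbolic cotangent, `coth θ = cosh θ / sinh θ`. -/
noncomputable def coth (θ : ℝ) : ℝ := Real.cosh θ / Real.sinh θ

lemma supg_key (μ β h E A D : ℝ) (hμ : μ ≠ 0) (hβ : β ≠ 0) (hh : h ≠ 0)
    (hE : E ≠ 0) (hsE : E - E⁻¹ ≠ 0) (hD : D ≠ 0) :
    (μ + h / (2 * β) * ((E + E⁻¹) / 2 / ((E - E⁻¹) / 2) - 1 / (β * h / (2 * μ))) * β ^ 2) *
      (2 * ((A * (E * E) - 1) / D) - (A * (E * E) * (E * E) - 1) / D - (A - 1) / D) / h ^ 2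
    + β * ((A * (E * E) * (E * E) - 1) / D - (A - 1) / D) / (2 * h) = 0 := by
  have hPe : β * h / (2 * μ) ≠ 0 := by
    apply div_ne_zero (mul_ne_zero hβ hh)
    simpa using hμ
  have hsE2 : E * E - 1 ≠ 0 := by
    have h2 : E * (E - E⁻¹) = E * E - 1 := by field_simp
    rw [← h2]
    exact mul_ne_zero hE hsE
  have hcoth : (E + E⁻¹) / 2 / ((E - E⁻¹) / 2) = (E * E + 1) / (E * E - 1) := by
    rw [div_div_div_cancel_right₀, div_eq_div_iff hsE hsE2]
    · field_simp
    · norm_num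
  have hsE3 : E ^ 2 - 1 ≠ 0 := by rw [sq]; exact hsE2
  rw [hcoth, ← sq]
  field_simp
  ring

/-- Nodal exactness of the SUPG scheme with the theoretical stabilization
parameter `τ* = (h/(2β))·(coth Pe − 1/Pe)` for the 1D advection–diffusion problem with
zero forcing and linear finite elements: with `h = 1/N`, `ρ = exp(βh/μ)` and the exact
nodal values `u_k = (ρ^k − 1)/(ρ^N − 1)`, one has `u_0 = 0`, `u_N = 1`, and the SUPG
difference equation
`(μ + τ*β²)(2u_k − u_{k+1} − u_{k−1})/h² + β(u_{k+1} − u_{k−1})/(2h) = 0`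
holds at every interior node `1 ≤ k ≤ N−1`. -/
theorem stmt_7 (μ β : ℝ) (hμ : 0 < μ) (hβ : 0 < β) (N : ℕ) (hN : 2 ≤ N) :
    let h : ℝ := 1 / N
    let Pe : ℝ := β * h / (2 * μ)
    let τstar : ℝ := h / (2 * β) * (coth Pe - 1 / Pe)
    let ρ : ℝ := Real.exp (β * h / μ)
    let u : ℕ → ℝ := fun k => (ρ ^ k - 1) / (ρ ^ N - 1)
    u 0 = 0 ∧ u N = 1 ∧
    ∀ k : ℕ, 1 ≤ k → k ≤ N - 1 →
      (μ + τstar * β ^ 2) * (2 * u k - u (k + 1) - u (k - 1)) / h ^ 2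
        + β * (u (k + 1) - u (k - 1)) / (2 * h) = 0 := by
  intro h Pe τstar ρ u
  have hNpos : 0 < N := by omega
  have hN0 : (0:ℝ) < N := by exact_mod_cast hNpos
  have hh : 0 < h := by positivity
  have hPe : 0 < Pe := by positivity
  have hρ1 : 1 < ρ := by
    have h1 : 0 < β * h / μ := by positivity
    have h2 := Real.add_one_le_exp (β * h / μ)
    simp only [ρ]
    linarith
  have hρN : ρ ^ N - 1 ≠ 0 := by
    have : 1 < ρ ^ N := one_lt_pow₀ hρ1 (by omega)
    linarith
  have hsinh : Real.sinh Pe ≠ 0 := by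
    have := Real.sinh_pos_iff.mpr hPe
    linarith
  have hE : Real.exp Pe ≠ 0 := Real.exp_ne_zero _
  have harg : β * h / μ = Pe + Pe := by
    simp only [Pe]
    field_simp
    ring
  have hρE : ρ = Real.exp Pe * Real.exp Pe := by
    simp only [ρ, harg, Real.exp_add]
  have hcosh : Real.cosh Pe = (Real.exp Pe + (Real.exp Pe)⁻¹) / 2 := by
    rw [Real.cosh_eq, Real.exp_neg]
  have hsinh' : Real.sinh Pe = (Real.exp Pe - (Real.exp Pe)⁻¹) / 2 := by
    rw [Real.sinh_eq, Real.exp_neg]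
  have hsE : Real.exp Pe - (Real.exp Pe)⁻¹ ≠ 0 := by
    rw [hsinh'] at hsinh
    intro hc; apply hsinh; rw [hc]; ring
  refine ⟨by simp [u], by simp [u, div_self hρN], ?_⟩
  intro k hk1 hk2
  obtain ⟨j, rfl⟩ : ∃ j, k = j + 1 := ⟨k - 1, by omega⟩
  simp only [u, τstar, coth, Nat.add_sub_cancel]
  rw [hcosh, hsinh',
    show ρ ^ (j + 1 + 1) = ρ ^ j * (Real.exp Pe * Real.exp Pe) * (Real.exp Pe * Real.exp Pe) by
      rw [pow_succ, pow_succ, hρE],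
    show ρ ^ (j + 1) = ρ ^ j * (Real.exp Pe * Real.exp Pe) by rw [pow_succ, hρE]]
  exact supg_key μ β h (Real.exp Pe) (ρ ^ j) (ρ ^ N - 1)
    (ne_of_gt hμ) (ne_of_gt hβ) (ne_of_gt hh) hE hsE hρN
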